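/- In 𝔅, for every i ∈ I and r ∈ ℕ one has b_{i,r+1} = (2(α_i,α_i))⁻¹·[h_{i,1}, b_{i,r}] and h_{i,2r+1} = [b_{i,0}, b_{i,2r+1}]. Consequently 𝔅 is generated as a ℂ-algebra by the elements b_{i,0}, b_{i,1} and h_{i,1} for i ∈ I. -/

import Mathlib

noncomputable section

/-- Data of a symmetrizable generalized Cartan matrix `(c_{ij})` (of finite type size bounds)
together with a positive symmetrizer `(d_i)`. -/
structure CartanData (I : Type) [Fintype I] : Type where
  c : I → I → ℤ
  d : I → ℝ
  c_diag : ∀ i, c i i = 2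
  c_nonpos : ∀ i j, i ≠ j → c i j ≤ 0
  c_zero_iff : ∀ i j, c i j = 0 ↔ c j i = 0
  c_bound : ∀ i j, i ≠ j → c i j * c j i ≤ 3
  d_pos : ∀ i, 0 < d i
  d_symm : ∀ i j, d i * (c i j : ℝ) = d j * (c j i : ℝ)

/-- The pairing `(α_i, α_j) = d_i · c_{ij}`. -/
def CartanData.al {I : Type} [Fintype I] (A : CartanData I) (i j : I) : ℝ :=
  A.d i * (A.c i j : ℝ)

/-- Generators for Drinfeld-type presentations: `h i r` stands for `h_{i,2r+1}` and
`b i r` stands for `b_{i,r}`. -/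
inductive TYGen (I : Type) : Type
  | h : I → ℕ → TYGen I
  | b : I → ℕ → TYGen I

section Algebras

variable {I : Type} [Fintype I] [DecidableEq I]

/-- The element `h_{i,r}` of the free algebra, for `r : ℤ`, with the conventions
`h_{i,-1} = 1` and `h_{i,r} = 0` for `r` even or `r < -1`. -/
def TYh (i : I) (r : ℤ) : FreeAlgebra ℂ (TYGen I) :=
  if r = -1 then 1
  else if 0 ≤ r ∧ r % 2 = 1 then FreeAlgebra.ι ℂ (TYGen.h i ((r - 1) / 2).toNat)
  else 0

/-- The generator `b_{i,r}` of the free algebra. -/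
def TYb (i : I) (r : ℕ) : FreeAlgebra ℂ (TYGen I) := FreeAlgebra.ι ℂ (TYGen.b i r)

/-- The generator `h_{i,2r+1}` of the free algebra. -/
def TYhodd (i : I) (r : ℕ) : FreeAlgebra ℂ (TYGen I) := FreeAlgebra.ι ℂ (TYGen.h i r)

/-- The element `h_{i,n}` of the free algebra, `n : ℕ`, with the convention `h_{i,2r} = 0`. -/
def TYhnat (i : I) (n : ℕ) : FreeAlgebra ℂ (TYGen I) :=
  if n % 2 = 1 then FreeAlgebra.ι ℂ (TYGen.h i ((n - 1) / 2)) else 0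

/-- Defining relations of the twisted Yangian `ᵢY` in Drinfeld presentation. -/
inductive TYRel (A : CartanData I) : FreeAlgebra ℂ (TYGen I) → FreeAlgebra ℂ (TYGen I) → Prop
  | ty0 (i j : I) (r s : ℤ) : TYRel A ⁅TYh i r, TYh j s⁆ 0
  | ty1 (i j : I) (r s : ℕ) :
      TYRel A (⁅TYh i ((r : ℤ) + 1), TYb j s⁆ - ⁅TYh i ((r : ℤ) - 1), TYb j (s + 2)⁆)
        ((A.al i j : ℂ) •
            (TYh i ((r : ℤ) - 1) * TYb j (s + 1) + TYb j (s + 1) * TYh i ((r : ℤ) - 1))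
          + (((A.al i j : ℂ) ^ 2 / 4) • ⁅TYh i ((r : ℤ) - 1), TYb j s⁆))
  | ty2 (i j : I) (r s : ℕ) :
      TYRel A (⁅TYb i (r + 1), TYb j s⁆ - ⁅TYb i r, TYb j (s + 1)⁆)
        (((A.al i j : ℂ) / 2) • (TYb i r * TYb j s + TYb j s * TYb i r)
          - (if i = j then (2 : ℂ) * (-1 : ℂ) ^ s else 0) • TYh i ((r : ℤ) + (s : ℤ) + 1))
  | serre0 (i j : I) (hc : A.c i j = 0) : TYRel A ⁅TYb i 0, TYb j 0⁆ 0
  | serre1 (i j : I) (hc : A.c i j = -1) :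
      TYRel A ⁅TYb i 0, ⁅TYb i 0, TYb j 0⁆⁆ ((-(A.d i : ℂ)) • TYb j 0)
  | serre2 (i j : I) (hc : A.c i j = -2) :
      TYRel A ⁅TYb i 0, ⁅TYb i 0, ⁅TYb i 0, TYb j 0⁆⁆⁆
        (((-4 : ℂ) * (A.d i : ℂ)) • ⁅TYb i 0, TYb j 0⁆)
  | serre3 (i j : I) (hc : A.c i j = -3) :
      TYRel A ⁅TYb i 0, ⁅TYb i 0, ⁅TYb i 0, ⁅TYb i 0, TYb j 0⁆⁆⁆⁆
        (((-10 : ℂ) * (A.d i : ℂ)) • ⁅TYb i 0, ⁅TYb i 0, TYb j 0⁆⁆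
          + ((-9 : ℂ) * (A.d i : ℂ) ^ 2) • TYb j 0)

/-- The twisted Yangian `ᵢY` in Drinfeld presentation. -/
abbrev TY (A : CartanData I) : Type := RingQuot (TYRel A)

/-- The generator `h_{i,2r+1}` of the twisted Yangian `ᵢY`. -/
def tyH (A : CartanData I) (i : I) (r : ℕ) : TY A :=
  RingQuot.mkAlgHom ℂ (TYRel A) (TYhodd i r)

/-- The generator `b_{i,r}` of the twisted Yangian `ᵢY`. -/
def tyB (A : CartanData I) (i : I) (r : ℕ) : TY A :=
  RingQuot.mkAlgHom ℂ (TYRel A) (TYb i r)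

/-- Defining relations of the algebra `𝔅` (the presentation of `U(g[z]^ω̌)`). -/
inductive BRel (A : CartanData I) : FreeAlgebra ℂ (TYGen I) → FreeAlgebra ℂ (TYGen I) → Prop
  | hh (i j : I) (r s : ℕ) : BRel A ⁅TYhodd i r, TYhodd j s⁆ 0
  | hb (i j : I) (r s : ℕ) :
      BRel A ⁅TYhodd i r, TYb j s⁆ ((2 * (A.al i j : ℂ)) • TYb j (2 * r + s + 1))
  | bb (i j : I) (r s : ℕ) :
      BRel A (⁅TYb i (r + 1), TYb j s⁆ - ⁅TYb i r, TYb j (s + 1)⁆)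
        ((-(if i = j then (-1 : ℂ) ^ r + (-1 : ℂ) ^ s else 0)) • TYhnat i (r + s + 1))
  | serre0 (i j : I) (hc : A.c i j = 0) : BRel A ⁅TYb i 0, TYb j 0⁆ 0
  | serre1 (i j : I) (hc : A.c i j = -1) :
      BRel A ⁅TYb i 0, ⁅TYb i 0, TYb j 0⁆⁆ ((-(A.d i : ℂ)) • TYb j 0)
  | serre2 (i j : I) (hc : A.c i j = -2) :
      BRel A ⁅TYb i 0, ⁅TYb i 0, ⁅TYb i 0, TYb j 0⁆⁆⁆
        (((-4 : ℂ) * (A.d i : ℂ)) • ⁅TYb i 0, TYb j 0⁆)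
  | serre3 (i j : I) (hc : A.c i j = -3) :
      BRel A ⁅TYb i 0, ⁅TYb i 0, ⁅TYb i 0, ⁅TYb i 0, TYb j 0⁆⁆⁆⁆
        (((-10 : ℂ) * (A.d i : ℂ)) • ⁅TYb i 0, ⁅TYb i 0, TYb j 0⁆⁆
          + ((-9 : ℂ) * (A.d i : ℂ) ^ 2) • TYb j 0)

/-- The algebra `𝔅`. -/
abbrev BAlg (A : CartanData I) : Type := RingQuot (BRel A)

/-- The generator `h_{i,2r+1}` of `𝔅`. -/
def hB (A : CartanData I) (i : I) (r : ℕ) : BAlg A :=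
  RingQuot.mkAlgHom ℂ (BRel A) (TYhodd i r)

/-- The generator `b_{i,r}` of `𝔅`. -/
def bB (A : CartanData I) (i : I) (r : ℕ) : BAlg A :=
  RingQuot.mkAlgHom ℂ (BRel A) (TYb i r)

end Algebras

/-- Generators `h_{i,1}`, `b_{i,0}`, `b_{i,1}` for the minimalistic presentations. -/
inductive MinGen (I : Type) : Type
  | h1 : I → MinGen I
  | b0 : I → MinGen I
  | b1 : I → MinGen I

section MinAlgebras

variable {I : Type} [Fintype I] [DecidableEq I]

/-- The generator `h_{i,1}` of the free algebra. -/
def mh (i : I) : FreeAlgebra ℂ (MinGen I) := FreeAlgebra.ι ℂ (MinGen.h1 i)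

/-- The generator `b_{i,0}` of the free algebra. -/
def mb0 (i : I) : FreeAlgebra ℂ (MinGen I) := FreeAlgebra.ι ℂ (MinGen.b0 i)

/-- The generator `b_{i,1}` of the free algebra. -/
def mb1 (i : I) : FreeAlgebra ℂ (MinGen I) := FreeAlgebra.ι ℂ (MinGen.b1 i)

/-- Defining relations of the minimalistic presentation `ᵢY^min`. -/
inductive MinRel (A : CartanData I) : FreeAlgebra ℂ (MinGen I) → FreeAlgebra ℂ (MinGen I) → Prop
  | hh (i j : I) : MinRel A ⁅mh i, mh j⁆ 0
  | hb (i j : I) : MinRel A ⁅mh i, mb0 j⁆ ((2 * (A.al i j : ℂ)) • mb1 j)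
  | bb (i j : I) :
      MinRel A (⁅mb1 i, mb0 j⁆ - ⁅mb0 i, mb1 j⁆)
        (((A.al i j : ℂ) / 2) • (mb0 i * mb0 j + mb0 j * mb0 i)
          - (if i = j then (2 : ℂ) else 0) • mh i)
  | serre0 (i j : I) (hc : A.c i j = 0) : MinRel A ⁅mb0 i, mb0 j⁆ 0
  | serre1 (i j : I) (hc : A.c i j = -1) :
      MinRel A ⁅mb0 i, ⁅mb0 i, mb0 j⁆⁆ ((-(A.d i : ℂ)) • mb0 j)
  | serre2 (i j : I) (hc : A.c i j = -2) :
      MinRel A ⁅mb0 i, ⁅mb0 i, ⁅mb0 i, mb0 j⁆⁆⁆ (((-4 : ℂ) * (A.d i : ℂ)) • ⁅mb0 i, mb0 j⁆)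
  | serre3 (i j : I) (hc : A.c i j = -3) :
      MinRel A ⁅mb0 i, ⁅mb0 i, ⁅mb0 i, ⁅mb0 i, mb0 j⁆⁆⁆⁆
        (((-10 : ℂ) * (A.d i : ℂ)) • ⁅mb0 i, ⁅mb0 i, mb0 j⁆⁆
          + ((-9 : ℂ) * (A.d i : ℂ) ^ 2) • mb0 j)

/-- The relations of `ᵢY^min` together with the additional relation
`[h_{i₀,1},[b_{i₀,1},[h_{i₀,1},b_{i₀,1}]]] = (α_{i₀},α_{i₀})² [b_{i₀,1}², h_{i₀,1}]`. -/
inductive MinRelP (A : CartanData I) (i₀ : I) :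
    FreeAlgebra ℂ (MinGen I) → FreeAlgebra ℂ (MinGen I) → Prop
  | base {x y : FreeAlgebra ℂ (MinGen I)} : MinRel A x y → MinRelP A i₀ x y
  | extra : MinRelP A i₀ ⁅mh i₀, ⁅mb1 i₀, ⁅mh i₀, mb1 i₀⁆⁆⁆
      (((A.al i₀ i₀ : ℂ) ^ 2) • ⁅mb1 i₀ * mb1 i₀, mh i₀⁆)

/-- Defining relations of the algebra `𝒰`. -/
inductive URel (A : CartanData I) : FreeAlgebra ℂ (MinGen I) → FreeAlgebra ℂ (MinGen I) → Prop
  | hh (i j : I) : URel A ⁅mh i, mh j⁆ 0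
  | hb (i j : I) : URel A ⁅mh i, mb0 j⁆ ((2 * (A.al i j : ℂ)) • mb1 j)
  | bb (i j : I) :
      URel A ⁅mb1 i, mb0 j⁆ (⁅mb0 i, mb1 j⁆ - (if i = j then (2 : ℂ) else 0) • mh i)
  | serre0 (i j : I) (hc : A.c i j = 0) : URel A ⁅mb0 i, mb0 j⁆ 0
  | serre1 (i j : I) (hc : A.c i j = -1) :
      URel A ⁅mb0 i, ⁅mb0 i, mb0 j⁆⁆ ((-(A.d i : ℂ)) • mb0 j)
  | serre2 (i j : I) (hc : A.c i j = -2) :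
      URel A ⁅mb0 i, ⁅mb0 i, ⁅mb0 i, mb0 j⁆⁆⁆ (((-4 : ℂ) * (A.d i : ℂ)) • ⁅mb0 i, mb0 j⁆)
  | serre3 (i j : I) (hc : A.c i j = -3) :
      URel A ⁅mb0 i, ⁅mb0 i, ⁅mb0 i, ⁅mb0 i, mb0 j⁆⁆⁆⁆
        (((-10 : ℂ) * (A.d i : ℂ)) • ⁅mb0 i, ⁅mb0 i, mb0 j⁆⁆
          + ((-9 : ℂ) * (A.d i : ℂ) ^ 2) • mb0 j)

/-- The relations of `𝒰` together with the additional relation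
`[h_{i₀,1},[b_{i₀,1},[h_{i₀,1},b_{i₀,1}]]] = 0`. -/
inductive URelP (A : CartanData I) (i₀ : I) :
    FreeAlgebra ℂ (MinGen I) → FreeAlgebra ℂ (MinGen I) → Prop
  | base {x y : FreeAlgebra ℂ (MinGen I)} : URel A x y → URelP A i₀ x y
  | extra : URelP A i₀ ⁅mh i₀, ⁅mb1 i₀, ⁅mh i₀, mb1 i₀⁆⁆⁆ 0

/-- The algebra `𝒰`. -/
abbrev UAlg (A : CartanData I) : Type := RingQuot (URel A)

/-- The generator `h_{i,1}` of `𝒰`. -/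
def uH1 (A : CartanData I) (i : I) : UAlg A := RingQuot.mkAlgHom ℂ (URel A) (mh i)

/-- The generator `b_{i,0}` of `𝒰`. -/
def uB0 (A : CartanData I) (i : I) : UAlg A := RingQuot.mkAlgHom ℂ (URel A) (mb0 i)

/-- The generator `b_{i,1}` of `𝒰`. -/
def uB1 (A : CartanData I) (i : I) : UAlg A := RingQuot.mkAlgHom ℂ (URel A) (mb1 i)

/-- The elements `b_{i,r}` of `𝒰`, defined recursively by
`b_{i,r+1} := (2(α_i,α_i))⁻¹ [h_{i,1}, b_{i,r}]` for `r ≥ 1`. -/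
def uB (A : CartanData I) (i : I) : ℕ → UAlg A
  | 0 => uB0 A i
  | 1 => uB1 A i
  | r + 2 => (2 * (A.al i i : ℂ))⁻¹ • ⁅uH1 A i, uB A i (r + 1)⁆

/-- The elements `h_{i,r}` of `𝒰`: `h_{i,0} := 0`, `h_{i,1}` is the generator, and
`h_{i,r+1} := [b_{i,0}, b_{i,r+1}]` for `r ≥ 1`. -/
def uH (A : CartanData I) (i : I) : ℕ → UAlg A
  | 0 => 0
  | 1 => uH1 A i
  | r + 2 => ⁅uB0 A i, uB A i (r + 2)⁆

end MinAlgebras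

section BHelper

variable {I : Type} [Fintype I] [DecidableEq I] (A : CartanData I)

lemma B_rel_hb (i j : I) (r s : ℕ) :
    ⁅hB A i r, bB A j s⁆ = (2 * (A.al i j : ℂ)) • bB A j (2 * r + s + 1) := by
  have h := RingQuot.mkAlgHom_rel ℂ (BRel.hb (A := A) i j r s)
  simpa [hB, bB, Ring.lie_def, map_sub, map_mul, map_smul] using h

lemma B_rel_bb (i : I) (r s : ℕ) (hrs : (r + s) % 2 = 0) :
    ⁅bB A i (r + 1), bB A i s⁆ - ⁅bB A i r, bB A i (s + 1)⁆
      = (-((-1 : ℂ) ^ r + (-1 : ℂ) ^ s)) • hB A i ((r + s) / 2) := by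
  have h := RingQuot.mkAlgHom_rel ℂ (BRel.bb (A := A) i i r s)
  have h1 : (r + s + 1) % 2 = 1 := by omega
  have hn : TYhnat (I := I) i (r + s + 1) = TYhodd i ((r + s) / 2) := by
    simp [TYhnat, TYhodd, h1]
  rw [hn] at h
  simpa [hB, bB, Ring.lie_def, map_sub, map_mul, map_smul] using h

lemma B_bracket_step (i : I) (k : ℕ) :
    ⁅bB A i k, bB A i (k + 1)⁆ = ((-1 : ℂ) ^ k) • hB A i k := by
  have h := B_rel_bb A i k k (by omega)
  have hidx : (k + k) / 2 = k := by omega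
  rw [hidx] at h
  have hskew : ⁅bB A i (k + 1), bB A i k⁆ = -⁅bB A i k, bB A i (k + 1)⁆ := by
    rw [Ring.lie_def, Ring.lie_def]; abel
  rw [hskew] at h
  have h2 : (-2 : ℂ) • ⁅bB A i k, bB A i (k + 1)⁆
      = (-2 : ℂ) • (((-1 : ℂ) ^ k) • hB A i k) := by
    rw [smul_smul]
    calc (-2 : ℂ) • ⁅bB A i k, bB A i (k + 1)⁆
        = -⁅bB A i k, bB A i (k + 1)⁆ - ⁅bB A i k, bB A i (k + 1)⁆ := by module
      _ = (-((-1 : ℂ) ^ k + (-1 : ℂ) ^ k)) • hB A i k := h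
      _ = ((-2 : ℂ) * (-1 : ℂ) ^ k) • hB A i k := by
          congr 1; ring
  have h3 := congrArg (((-2 : ℂ)⁻¹) • ·) h2
  simpa [inv_smul_smul₀ (show (-2 : ℂ) ≠ 0 by norm_num)] using h3

lemma B_bracket_gen (i : I) (t : ℕ) : ∀ p : ℕ,
    ⁅bB A i p, bB A i (p + 2 * t + 1)⁆ = ((-1 : ℂ) ^ p) • hB A i (p + t) := by
  induction t with
  | zero => intro p; simpa using B_bracket_step A i p
  | succ t ih =>
    intro p
    have h := B_rel_bb A i p (p + 2 * t + 2) (by omega)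
    have hidx : (p + (p + 2 * t + 2)) / 2 = p + t + 1 := by omega
    rw [hidx] at h
    have hpow : ((-1 : ℂ)) ^ (p + 2 * t + 2) = (-1 : ℂ) ^ p := by
      rw [show p + 2 * t + 2 = p + 2 * (t + 1) by ring, pow_add, pow_mul]
      norm_num
    rw [hpow] at h
    have ih' := ih (p + 1)
    rw [show p + 1 + 2 * t + 1 = p + 2 * t + 2 by omega,
      show p + 1 + t = p + t + 1 by omega] at ih'
    rw [ih'] at h
    have hg : ⁅bB A i p, bB A i (p + 2 * t + 2 + 1)⁆
        = ((-1 : ℂ) ^ (p + 1)) • hB A i (p + t + 1)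
          - (-((-1 : ℂ) ^ p + (-1 : ℂ) ^ p)) • hB A i (p + t + 1) := by
      rw [← h]; abel
    rw [show p + 2 * (t + 1) + 1 = p + 2 * t + 2 + 1 by ring, hg,
      show p + (t + 1) = p + t + 1 by omega, pow_succ]
    match_scalars
    ring

lemma B_al_ne (i : I) : (2 * (A.al i i : ℂ)) ≠ 0 := by
  have h1 : A.al i i = A.d i * 2 := by
    rw [CartanData.al, A.c_diag]; push_cast; ring
  have h2 : A.al i i ≠ 0 := by
    have := A.d_pos i; rw [h1]; positivity
  exact mul_ne_zero two_ne_zero (by exact_mod_cast h2)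

end BHelper

/-- in `𝔅`, `b_{i,r+1} = (2(α_i,α_i))⁻¹ [h_{i,1}, b_{i,r}]` and
`h_{i,2r+1} = [b_{i,0}, b_{i,2r+1}]`; consequently `𝔅` is generated by the `b_{i,0}`,
`b_{i,1}` and `h_{i,1}`. -/
theorem B_recursion_and_generation
    {I : Type} [Fintype I] [DecidableEq I] [Nonempty I] (A : CartanData I) :
    (∀ (i : I) (r : ℕ), bB A i (r + 1) = (2 * (A.al i i : ℂ))⁻¹ • ⁅hB A i 0, bB A i r⁆) ∧
    (∀ (i : I) (r : ℕ), hB A i r = ⁅bB A i 0, bB A i (2 * r + 1)⁆) ∧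
    Algebra.adjoin ℂ
      ((Set.range fun i : I => bB A i 0) ∪ (Set.range fun i : I => bB A i 1)
        ∪ (Set.range fun i : I => hB A i 0)) = ⊤ := by
  have part1 : ∀ (i : I) (r : ℕ),
      bB A i (r + 1) = (2 * (A.al i i : ℂ))⁻¹ • ⁅hB A i 0, bB A i r⁆ := by
    intro i r
    rw [B_rel_hb A i i 0 r, show 2 * 0 + r + 1 = r + 1 by omega, smul_smul,
      inv_mul_cancel₀ (B_al_ne A i), one_smul]
  have part2 : ∀ (i : I) (r : ℕ), hB A i r = ⁅bB A i 0, bB A i (2 * r + 1)⁆ := by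
    intro i r
    have := B_bracket_gen A i r 0
    simpa using this.symm
  refine ⟨part1, part2, ?_⟩
  set S := (Set.range fun i : I => bB A i 0) ∪ (Set.range fun i : I => bB A i 1)
      ∪ (Set.range fun i : I => hB A i 0) with hS
  have hb0 : ∀ i : I, bB A i 0 ∈ Algebra.adjoin ℂ S :=
    fun i => Algebra.subset_adjoin (Or.inl (Or.inl ⟨i, rfl⟩))
  have hh0 : ∀ i : I, hB A i 0 ∈ Algebra.adjoin ℂ S :=
    fun i => Algebra.subset_adjoin (Or.inr ⟨i, rfl⟩)
  have hbmem : ∀ (i : I) (r : ℕ), bB A i r ∈ Algebra.adjoin ℂ S := by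
    intro i r
    induction r with
    | zero => exact hb0 i
    | succ r ih =>
      rw [part1 i r]
      refine Subalgebra.smul_mem _ ?_ _
      rw [Ring.lie_def]
      exact sub_mem (mul_mem (hh0 i) ih) (mul_mem ih (hh0 i))
  have hhmem : ∀ (i : I) (r : ℕ), hB A i r ∈ Algebra.adjoin ℂ S := by
    intro i r
    rw [part2 i r, Ring.lie_def]
    exact sub_mem (mul_mem (hbmem i 0) (hbmem i (2 * r + 1)))
      (mul_mem (hbmem i (2 * r + 1)) (hbmem i 0))
  rw [eq_top_iff]
  rintro x -
  obtain ⟨y, rfl⟩ := RingQuot.mkAlgHom_surjective ℂ (BRel A) x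
  induction y using FreeAlgebra.induction with
  | grade0 c =>
    simpa using Subalgebra.algebraMap_mem (Algebra.adjoin ℂ S) c
  | grade1 g =>
    cases g with
    | h i r => exact hhmem i r
    | b i r => exact hbmem i r
  | mul a b ha hb => rw [map_mul]; exact mul_mem ha hb
  | add a b ha hb => rw [map_add]; exact add_mem ha hb
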